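/- If G is a friendly-edge-colorable simple graph of class II (i.e., χ'(G) = Δ(G)+1), then ν(G \ x) = ν(G) for every vertex x, and consequently every component of G is factor-critical. -/

import Mathlib

open scoped Classical

/-- `M` is a matching of `G`, given as a finite set of edges. -/
def IsMatchingFinset {V : Type*} (G : SimpleGraph V) (M : Finset (Sym2 V)) : Prop :=
  (M : Set (Sym2 V)) ⊆ G.edgeSet ∧
    ∀ e ∈ M, ∀ f ∈ M, e ≠ f → ∀ v : V, ¬(v ∈ e ∧ v ∈ f)

/-- ν(G): the maximum size of a matching of `G`. -/
noncomputable def matchingNumber {V : Type*} (G : SimpleGraph V) : ℕ :=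
  sSup {n | ∃ M : Finset (Sym2 V), IsMatchingFinset G M ∧ M.card = n}

/-- A proper edge coloring of `G` using colors `< n`. -/
def IsProperEdgeColoring {V : Type*} (G : SimpleGraph V) (n : ℕ) (c : Sym2 V → ℕ) : Prop :=
  (∀ e ∈ G.edgeSet, c e < n) ∧
    ∀ e ∈ G.edgeSet, ∀ f ∈ G.edgeSet, e ≠ f → (∃ v : V, v ∈ e ∧ v ∈ f) → c e ≠ c f

/-- χ'(G): the edge chromatic index of `G`. -/
noncomputable def chromaticIndex {V : Type*} (G : SimpleGraph V) : ℕ :=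
  sInf {n | ∃ c : Sym2 V → ℕ, IsProperEdgeColoring G n c}

/-- `G` is friendly-edge-colorable: its edge set is partitioned into maximum matchings. -/
noncomputable def Friendly {V : Type*} [Fintype V] (G : SimpleGraph V) : Prop :=
  ∃ P : Finset (Finset (Sym2 V)),
    (∀ M ∈ P, IsMatchingFinset G M ∧ M.card = matchingNumber G) ∧
    (∀ e, e ∈ G.edgeFinset ↔ ∃ M ∈ P, e ∈ M) ∧
    ∀ M ∈ P, ∀ N ∈ P, M ≠ N → Disjoint M N

/-- The graph `G` with vertex `x` deleted. -/
def delVert {V : Type*} (G : SimpleGraph V) (x : V) : SimpleGraph {v : V // v ≠ x} :=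
  G.induce {v : V | v ≠ x}

/-- `G` has a perfect matching. -/
def HasPerfectMatchingFinset {V : Type*} (G : SimpleGraph V) : Prop :=
  ∃ M : Finset (Sym2 V), IsMatchingFinset G M ∧ ∀ v : V, ∃ e ∈ M, v ∈ e

/-- `G` is factor-critical. -/
def FactorCritical {V : Type*} (G : SimpleGraph V) : Prop :=
  G.Connected ∧ ∀ x : V, HasPerfectMatchingFinset (delVert G x)

namespace FriendlyAux

variable {V : Type*} [Fintype V] (G : SimpleGraph V)

/-- the set of fixed points of `f`. -/
noncomputable def fixSet (f : V → V) : Finset V := Finset.univ.filter (fun v => f v = v)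

lemma mem_fixSet {f : V → V} {v : V} : v ∈ fixSet f ↔ f v = v := by
  simp [fixSet]

/-- `f` is a matching involution. -/
def MInv (f : V → V) : Prop :=
  Function.Involutive f ∧ ∀ v, f v ≠ v → G.Adj v (f v)

/-- the edge set of a matching involution. -/
noncomputable def invMatch (f : V → V) : Finset (Sym2 V) :=
  (Finset.univ.filter (fun v => f v ≠ v)).image (fun v => s(v, f v))

variable {G}

lemma invMatch_eq_of_mem {f : V → V} (hf : Function.Involutive f) {v : V} {e : Sym2 V}
    (he : e ∈ invMatch f) (hv : v ∈ e) : e = s(v, f v) := by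
  simp only [invMatch, Finset.mem_image, Finset.mem_filter, Finset.mem_univ, true_and] at he
  obtain ⟨a, ha, rfl⟩ := he
  rw [Sym2.mem_iff] at hv
  rcases hv with rfl | rfl
  · rfl
  · rw [hf a, Sym2.eq_swap]

lemma mem_invMatch_self {f : V → V} {v : V} (hv : f v ≠ v) : s(v, f v) ∈ invMatch f := by
  simp only [invMatch, Finset.mem_image, Finset.mem_filter, Finset.mem_univ, true_and]
  exact ⟨v, hv, rfl⟩

lemma invMatch_isMatching {f : V → V} (hf : MInv G f) : IsMatchingFinset G (invMatch f) := by
  constructor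
  · intro e he
    simp only [invMatch, Finset.coe_image, Set.mem_image] at he
    obtain ⟨a, ha, rfl⟩ := he
    simp only [Finset.coe_filter, Set.mem_setOf_eq, Finset.mem_univ, true_and] at ha
    exact (hf.2 a ha)
  · intro e he e' he' hne v hv
    exact hne ((invMatch_eq_of_mem hf.1 he hv.1).trans (invMatch_eq_of_mem hf.1 he' hv.2).symm)

lemma invMatch_cover {f : V → V} (hf : MInv G f) {v : V} :
    (∃ e ∈ invMatch f, v ∈ e) ↔ f v ≠ v := by
  constructor
  · rintro ⟨e, he, hv⟩
    intro hfix
    have := invMatch_eq_of_mem hf.1 he hv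
    subst this
    rw [hfix] at he
    simp only [invMatch, Finset.mem_image, Finset.mem_filter, Finset.mem_univ, true_and] at he
    obtain ⟨a, ha, hae⟩ := he
    rw [Sym2.eq_iff] at hae
    rcases hae with ⟨rfl, h2⟩ | ⟨rfl, h2⟩ <;> exact ha h2
  · intro hv
    exact ⟨s(v, f v), mem_invMatch_self hv, Sym2.mem_mk_left _ _⟩

lemma invMatch_card {f : V → V} (hf : MInv G f) :
    (Finset.univ.filter (fun v => f v ≠ v)).card = 2 * (invMatch f).card := by
  rw [Finset.card_eq_sum_card_image (fun v => s(v, f v)) (Finset.univ.filter (fun v => f v ≠ v)),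
    ← invMatch]
  rw [Finset.sum_congr rfl (g := fun _ => 2), Finset.sum_const, smul_eq_mul, mul_comm]
  intro e he
  simp only [invMatch, Finset.mem_image, Finset.mem_filter, Finset.mem_univ, true_and] at he
  obtain ⟨v, hv, rfl⟩ := he
  have : (Finset.filter (fun a => s(a, f a) = s(v, f v)) (Finset.filter (fun v => f v ≠ v)
      Finset.univ)) = {v, f v} := by
    ext a
    simp only [Finset.mem_filter, Finset.mem_univ, true_and, Finset.mem_insert,
      Finset.mem_singleton]
    constructor
    · rintro ⟨ha, hae⟩
      rw [Sym2.eq_iff] at hae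
      rcases hae with ⟨h1, h2⟩ | ⟨h1, h2⟩
      · exact Or.inl h1
      · exact Or.inr h1
    · rintro (rfl | rfl)
      · exact ⟨hv, rfl⟩
      · refine ⟨by rw [hf.1 v]; exact fun h => hv h.symm, ?_⟩
        rw [hf.1 v, Sym2.eq_swap]
  rw [this]
  rw [Finset.card_insert_of_notMem (by simp only [Finset.mem_singleton]; exact fun h => hv h.symm), Finset.card_singleton]


section NuAPI

lemma matching_subset_edgeFinset {M : Finset (Sym2 V)} (hM : IsMatchingFinset G M) :
    M ⊆ G.edgeFinset := fun e he => by
  rw [SimpleGraph.mem_edgeFinset]; exact hM.1 he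

lemma bddAbove_matching_set :
    BddAbove {n | ∃ M : Finset (Sym2 V), IsMatchingFinset G M ∧ M.card = n} := by
  refine ⟨G.edgeFinset.card, ?_⟩
  rintro n ⟨M, hM, rfl⟩
  exact Finset.card_le_card (matching_subset_edgeFinset hM)

lemma card_le_matchingNumber {M : Finset (Sym2 V)} (hM : IsMatchingFinset G M) :
    M.card ≤ matchingNumber G :=
  le_csSup bddAbove_matching_set ⟨M, hM, rfl⟩

lemma empty_isMatching : IsMatchingFinset G (∅ : Finset (Sym2 V)) := by
  constructor
  · simp
  · intro e he; simp at he

lemma exists_max_matching :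
    ∃ M : Finset (Sym2 V), IsMatchingFinset G M ∧ M.card = matchingNumber G := by
  have hne : {n | ∃ M : Finset (Sym2 V), IsMatchingFinset G M ∧ M.card = n}.Nonempty :=
    ⟨0, ∅, empty_isMatching, rfl⟩
  have := Nat.sSup_mem hne (bddAbove_matching_set (G := G))
  exact this

end NuAPI

section InvAPI

/-- the matching involution associated to a finset matching. -/
noncomputable def matchInv (M : Finset (Sym2 V)) : V → V := fun v =>
  if h : ∃ e ∈ M, v ∈ e then Sym2.Mem.other h.choose_spec.2 else v

lemma matchInv_spec {M : Finset (Sym2 V)} (hM : IsMatchingFinset G M) {v : V} {e : Sym2 V}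
    (he : e ∈ M) (hv : v ∈ e) : s(v, matchInv M v) = e ∧ matchInv M v ≠ v := by
  have hex : ∃ e ∈ M, v ∈ e := ⟨e, he, hv⟩
  have h1 : hex.choose = e := by
    by_contra hne
    exact hM.2 _ hex.choose_spec.1 _ he hne v ⟨hex.choose_spec.2, hv⟩
  have hother := Sym2.other_spec hex.choose_spec.2
  rw [matchInv, dif_pos hex]
  constructor
  · rw [hother, h1]
  · intro hfix
    have : e ∈ G.edgeSet := hM.1 he
    have hd : ¬ e.IsDiag := G.not_isDiag_of_mem_edgeSet this
    rw [← h1, ← hother, hfix] at hd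
    exact hd (Sym2.isDiag_iff_proj_eq |>.mpr rfl)

lemma matchInv_fix {M : Finset (Sym2 V)} {v : V} (h : ¬ ∃ e ∈ M, v ∈ e) :
    matchInv M v = v := by rw [matchInv, dif_neg h]

lemma matchInv_minv {M : Finset (Sym2 V)} (hM : IsMatchingFinset G M) : MInv G (matchInv M) := by
  have key : ∀ v, matchInv M v ≠ v → s(v, matchInv M v) ∈ M := by
    intro v hv
    by_cases hex : ∃ e ∈ M, v ∈ e
    · obtain ⟨e, he, hve⟩ := hex
      rw [(matchInv_spec hM he hve).1]; exact he
    · exact absurd (matchInv_fix hex) hv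
  constructor
  · intro v
    by_cases hv : matchInv M v ≠ v
    · have hmem := key v hv
      have h2 := matchInv_spec hM hmem (Sym2.mem_mk_right _ _)
      rw [Sym2.eq_iff] at h2
      rcases h2.1 with ⟨h3, h4⟩ | ⟨h3, h4⟩
      · exact h4.trans h3
      · exact h4
    · push_neg at hv; rw [hv, hv]
  · intro v hv
    have := hM.1 (key v hv)
    rwa [SimpleGraph.mem_edgeSet] at this

lemma invMatch_matchInv {M : Finset (Sym2 V)} (hM : IsMatchingFinset G M) :
    invMatch (matchInv M) = M := by
  ext e
  constructor
  · intro he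
    simp only [invMatch, Finset.mem_image, Finset.mem_filter, Finset.mem_univ, true_and] at he
    obtain ⟨v, hv, rfl⟩ := he
    by_cases hex : ∃ e ∈ M, v ∈ e
    · obtain ⟨e, hem, hve⟩ := hex
      rw [(matchInv_spec hM hem hve).1]; exact hem
    · exact absurd (matchInv_fix hex) hv
  · intro he
    have hd : ¬ e.IsDiag := G.not_isDiag_of_mem_edgeSet (hM.1 he)
    obtain ⟨a, b⟩ := e
    have hab : a ≠ b := by rwa [Sym2.mk_isDiag_iff] at hd
    have h2 := matchInv_spec hM he (Sym2.mem_mk_left a b)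
    rw [← h2.1]
    exact mem_invMatch_self h2.2

lemma fixSet_card_add {f : V → V} (hf : MInv G f) :
    (fixSet f).card + 2 * (invMatch f).card = Fintype.card V := by
  rw [← invMatch_card hf, fixSet]
  rw [Finset.card_filter_add_card_filter_not (p := fun v => f v = v)]
  exact Finset.card_univ

/-- a maximum matching involution. -/
def MaxInv (G' : SimpleGraph V) (f : V → V) : Prop :=
  MInv G' f ∧ (fixSet f).card + 2 * matchingNumber G' = Fintype.card V

variable (G)

lemma minv_fix_lower {f : V → V} (hf : MInv G f) :
    Fintype.card V ≤ (fixSet f).card + 2 * matchingNumber G := by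
  have h1 := fixSet_card_add hf
  have h2 := card_le_matchingNumber (invMatch_isMatching hf)
  omega

variable {G}

set_option maxHeartbeats 1000000 in
lemma maxInv_of_card {M : Finset (Sym2 V)} (hM : IsMatchingFinset G M)
    (hcard : M.card = matchingNumber G) :
    MaxInv G (matchInv M) ∧ ∀ v, matchInv M v ≠ v ↔ ∃ e ∈ M, v ∈ e := by
  have hminv := matchInv_minv hM
  have him := invMatch_matchInv hM
  have hfix := fixSet_card_add hminv
  rw [him, hcard] at hfix
  refine ⟨⟨hminv, hfix⟩, fun v => ?_⟩
  constructor
  · intro hv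
    refine ⟨s(v, matchInv M v), ?_, Sym2.mem_mk_left _ _⟩
    have h3 := mem_invMatch_self hv
    rwa [him] at h3
  · rintro ⟨e, he, hve⟩
    exact (matchInv_spec hM he hve).2

lemma exists_maxInv : ∃ f, MaxInv G f := by
  obtain ⟨M, hM, hc⟩ := exists_max_matching (G := G)
  exact ⟨matchInv M, (maxInv_of_card hM hc).1⟩

end InvAPI


section Hybrid

/-- hybrid of two involutions along a closed set. -/
noncomputable def hyb (T : Finset V) (f g : V → V) : V → V := fun v => if v ∈ T then f v else g v

/-- `T` is closed under `f` and `g`. -/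
def Closed (T : Finset V) (f g : V → V) : Prop := ∀ v ∈ T, f v ∈ T ∧ g v ∈ T

lemma Closed.not_mem {T : Finset V} {f g : V → V} (hT : Closed T f g)
    (hg : Function.Involutive g) {v : V} (hv : v ∉ T) : g v ∉ T := by
  intro h
  have := (hT _ h).2
  rw [hg v] at this
  exact hv this

lemma hyb_apply {T : Finset V} {f g : V → V} {v : V} (hv : v ∈ T) : hyb T f g v = f v :=
  if_pos hv

lemma hyb_apply_not {T : Finset V} {f g : V → V} {v : V} (hv : v ∉ T) : hyb T f g v = g v :=
  if_neg hv

lemma hyb_minv {T : Finset V} {f g : V → V} (hf : MInv G f) (hg : MInv G g)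
    (hT : Closed T f g) : MInv G (hyb T f g) := by
  constructor
  · intro v
    by_cases hv : v ∈ T
    · rw [hyb_apply hv, hyb_apply (hT v hv).1, hf.1 v]
    · rw [hyb_apply_not hv, hyb_apply_not (hT.not_mem hg.1 hv), hg.1 v]
  · intro v hv
    by_cases hvT : v ∈ T
    · rw [hyb_apply hvT] at hv ⊢; exact hf.2 v hv
    · rw [hyb_apply_not hvT] at hv ⊢; exact hg.2 v hv

lemma fixSet_hyb {T : Finset V} {f g : V → V} :
    fixSet (hyb T f g) = (fixSet f ∩ T) ∪ (fixSet g \ T) := by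
  ext v
  simp only [mem_fixSet, Finset.mem_union, Finset.mem_inter, Finset.mem_sdiff, mem_fixSet, hyb]
  by_cases hv : v ∈ T <;> simp [hv]

lemma fixSet_hyb_card {T : Finset V} {f g : V → V} :
    (fixSet (hyb T f g)).card = (fixSet f ∩ T).card + (fixSet g \ T).card := by
  rw [fixSet_hyb, Finset.card_union_of_disjoint]
  intro s hs1 hs2 x hx
  have h1 := hs1 hx
  have h2 := hs2 hx
  simp only [Finset.mem_inter, Finset.mem_sdiff] at h1 h2
  exact absurd h1.2 h2.2

lemma closed_fix_card_eq {T : Finset V} {f g : V → V} (hf : MaxInv G f) (hg : MaxInv G g)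
    (hT : Closed T f g) : (fixSet f ∩ T).card = (fixSet g ∩ T).card := by
  have key : ∀ {f g : V → V}, MaxInv G f → MaxInv G g → Closed T f g →
      (fixSet g ∩ T).card ≤ (fixSet f ∩ T).card := by
    intro f g hf hg hT
    have h1 := minv_fix_lower G (hyb_minv hf.1 hg.1 hT)
    rw [fixSet_hyb_card] at h1
    have h2 : (fixSet g ∩ T).card + (fixSet g \ T).card = (fixSet g).card := by
      rw [Finset.card_inter_add_card_sdiff]
    have h3 := hg.2
    have h4 := hf.2
    omega
  have hT' : Closed T g f := fun v hv => ⟨(hT v hv).2, (hT v hv).1⟩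
  exact le_antisymm (key hg hf hT') (key hf hg hT)

lemma augment {f : V → V} (hf : MaxInv G f) {u v : V} (huv : G.Adj u v)
    (hu : f u = u) (hv : f v = v) : False := by
  have hne : u ≠ v := G.ne_of_adj huv
  set f' : V → V := fun x => if x = u then v else if x = v then u else f x with hf'
  have e_u : f' u = v := by rw [hf']; simp
  have e_v : f' v = u := by rw [hf']; simp [Ne.symm hne]
  have e_other : ∀ x, x ≠ u → x ≠ v → f' x = f x := by
    intro x h1 h2; rw [hf']; simp [h1, h2]
  have hinv : MInv G f' := by
    constructor
    · intro x
      by_cases hxu : x = u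
      · subst hxu; rw [e_u, e_v]
      · by_cases hxv : x = v
        · subst hxv; rw [e_v, e_u]
        · have hfx : f x ≠ u := by
            intro h; apply hxu; rw [← hu, ← h, hf.1.1 x]
          have hfx' : f x ≠ v := by
            intro h; apply hxv; rw [← hv, ← h, hf.1.1 x]
          rw [e_other x hxu hxv, e_other _ hfx hfx', hf.1.1 x]
    · intro x hx
      by_cases hxu : x = u
      · subst hxu; rw [e_u]; exact huv
      · by_cases hxv : x = v
        · subst hxv; rw [e_v]; exact huv.symm
        · rw [e_other x hxu hxv] at hx ⊢; exact hf.1.2 x hx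
  have hfixeq : fixSet f' = (fixSet f) \ {u, v} := by
    ext x
    simp only [mem_fixSet, Finset.mem_sdiff, Finset.mem_insert, Finset.mem_singleton]
    by_cases hxu : x = u
    · subst hxu
      rw [e_u]
      constructor
      · intro h; exact absurd h.symm hne
      · rintro ⟨-, h⟩; exact absurd (Or.inl rfl) h
    · by_cases hxv : x = v
      · subst hxv
        rw [e_v]
        constructor
        · intro h; exact absurd h hne
        · rintro ⟨-, h⟩; exact absurd (Or.inr rfl) h
      · rw [e_other x hxu hxv]
        constructor
        · intro h; exact ⟨h, by rintro (rfl | rfl) <;> simp_all⟩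
        · rintro ⟨h, -⟩; exact h
  have hsub : ({u, v} : Finset V) ⊆ fixSet f := by
    intro x hx
    rw [Finset.mem_insert, Finset.mem_singleton] at hx
    rcases hx with rfl | rfl
    · exact mem_fixSet.mpr hu
    · exact mem_fixSet.mpr hv
  have hcard2 : ({u, v} : Finset V).card = 2 := by
    rw [Finset.card_insert_of_notMem (by simpa using hne), Finset.card_singleton]
  have hcard : (fixSet f').card + 2 = (fixSet f).card := by
    rw [hfixeq, Finset.card_sdiff_of_subset hsub, hcard2]
    have : 2 ≤ (fixSet f).card := by
      calc 2 = ({u, v} : Finset V).card := hcard2.symm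
      _ ≤ _ := Finset.card_le_card hsub
    omega
  have h1 := minv_fix_lower G hinv
  have h2 := hf.2
  omega

end Hybrid


section Traj

variable (f g : V → V) (u : V)

/-- step function: even steps apply `g`, odd steps apply `f`. -/
noncomputable def stepFun (n : ℕ) : V → V := if Even n then g else f

/-- alternating trajectory starting at `u`. -/
noncomputable def traj : ℕ → V
  | 0 => u
  | (n + 1) => stepFun f g n (traj n)

variable {f g u}

lemma stepFun_congr {m n : ℕ} (h : m % 2 = n % 2) : stepFun f g m = stepFun f g n := by
  by_cases hm : Even m
  · have hn : Even n := by rw [Nat.even_iff] at hm ⊢; omega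
    simp only [stepFun, if_pos hm, if_pos hn]
  · have hn : ¬ Even n := by rw [Nat.even_iff] at hm ⊢; omega
    simp only [stepFun, if_neg hm, if_neg hn]

lemma traj_succ (n : ℕ) : traj f g u (n + 1) = stepFun f g n (traj f g u n) := rfl

variable (hf : Function.Involutive f) (hg : Function.Involutive g)

include hf hg in
lemma stepFun_involutive (n : ℕ) : Function.Involutive (stepFun f g n) := by
  unfold stepFun
  split
  · exact hg
  · exact hf

include hf hg in
lemma traj_back (n : ℕ) : stepFun f g n (traj f g u (n + 1)) = traj f g u n := by
  rw [traj_succ, stepFun_involutive hf hg]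

include hf hg in
lemma backtrack_of_collision (hu : f u = u) :
    ∀ j, (∃ i < j, traj f g u i = traj f g u j) → ∃ k < j, traj f g u (k + 1) = traj f g u k := by
  intro j
  induction j using Nat.strong_induction_on with
  | _ j IH =>
    rintro ⟨i, hij, heq⟩
    set x := traj f g u with hx
    rcases Nat.eq_zero_or_pos i with rfl | hipos
    · -- x j = u
      rcases Nat.lt_or_ge j 2 with hj2 | hj2
      · have hj1 : j = 1 := by omega
        subst hj1
        exact ⟨0, by omega, heq.symm⟩
      · -- j ≥ 2
        have hback : stepFun f g (j - 1) (x j) = x (j - 1) := by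
          have := traj_back hf hg (u := u) (j - 1)
          rwa [Nat.sub_add_cancel (by omega)] at this
        rw [← heq] at hback
        rcases Nat.even_or_odd (j - 1) with hpar | hpar
        · -- stepFun (j-1) = g, x (j-1) = g u = x 1
          have h0 : x 0 = u := by rw [hx]; rfl
          have h1 : x 1 = g (x 0) := by
            rw [hx, traj_succ, stepFun, if_pos (Even.zero)]
          have h2 : x (j - 1) = g u := by
            rw [← hback, stepFun, if_pos hpar, h0]
          have hcol : x 1 = x (j - 1) := by rw [h2, h1, h0]
          have hlt : 1 < j - 1 := by
            rcases Nat.lt_or_ge 1 (j-1) with h | h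
            · exact h
            · exfalso
              have : j - 1 = 1 := by omega
              rw [this] at hpar
              exact (Nat.not_even_iff_odd.mpr (by norm_num)) hpar
          obtain ⟨k, hk, hbk⟩ := IH (j - 1) (by omega) ⟨1, hlt, hcol⟩
          exact ⟨k, by omega, hbk⟩
        · -- stepFun (j-1) = f, x (j-1) = f u = u = x 0
          have h0 : x 0 = u := by rw [hx]; rfl
          have h2 : x (j - 1) = u := by
            rw [← hback, stepFun, if_neg (Nat.not_even_iff_odd.mpr hpar), h0, hu]
          obtain ⟨k, hk, hbk⟩ := IH (j - 1) (by omega) ⟨0, by omega, h2.symm⟩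
          exact ⟨k, by omega, hbk⟩
    · -- i ≥ 1
      rcases Nat.lt_or_ge i (j - 1) with hilt | hige
      · have hback : stepFun f g (j - 1) (x j) = x (j - 1) := by
          have := traj_back hf hg (u := u) (j - 1)
          rwa [Nat.sub_add_cancel (by omega)] at this
        rw [← heq] at hback
        by_cases hpar : (j - 1) % 2 = (i - 1) % 2
        · -- x (j - 1) = x (i - 1)
          have hb2 : stepFun f g (i - 1) (x i) = x (i - 1) := by
            have := traj_back hf hg (u := u) (i - 1)
            rwa [Nat.sub_add_cancel hipos] at this
          have h2 : x (j - 1) = x (i - 1) := by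
            rw [← hback, stepFun_congr hpar]
            exact hb2
          obtain ⟨k, hk, hbk⟩ := IH (j - 1) (by omega) ⟨i - 1, by omega, h2.symm⟩
          exact ⟨k, by omega, hbk⟩
        · -- stepFun (j-1) = stepFun i, x (j - 1) = x (i + 1)
          have hpar2 : (j - 1) % 2 = i % 2 := by omega
          have h2 : x (j - 1) = x (i + 1) := by
            rw [← hback, stepFun_congr hpar2, ← traj_succ]
          rcases Nat.lt_or_ge (i + 1) (j - 1) with h3 | h3
          · obtain ⟨k, hk, hbk⟩ := IH (j - 1) (by omega) ⟨i + 1, h3, h2.symm⟩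
            exact ⟨k, by omega, hbk⟩
          · -- i + 1 = j - 1 : parity contradiction
            exfalso
            have : i + 1 = j - 1 := by omega
            omega
      · -- i = j - 1 : backtrack
        have : i = j - 1 := by omega
        subst this
        refine ⟨j - 1, by omega, ?_⟩
        rw [Nat.sub_add_cancel (by omega)]
        exact heq.symm

include hf hg in
lemma exists_backtrack (hu : f u = u) : ∃ k, traj f g u (k + 1) = traj f g u k := by
  obtain ⟨a, b, hab, heq⟩ := Finite.exists_ne_map_eq_of_infinite (traj f g u)
  rcases Nat.lt_or_ge a b with h | h
  · obtain ⟨k, -, hk⟩ := backtrack_of_collision hf hg hu b ⟨a, h, heq⟩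
    exact ⟨k, hk⟩
  · obtain ⟨k, -, hk⟩ := backtrack_of_collision hf hg hu a ⟨b, by omega, heq.symm⟩
    exact ⟨k, hk⟩

end Traj

section TrajStruct

variable {f g : V → V} {u : V}
variable (hf : Function.Involutive f) (hg : Function.Involutive g)
  (hu : f u = u) (hgu : g u ≠ u)

/-- length of the trajectory: least `m` with a backtrack at `m`. -/
noncomputable def trajLen (f g : V → V) (u : V) (hf : Function.Involutive f)
    (hg : Function.Involutive g) (hu : f u = u) : ℕ :=
  Nat.find (exists_backtrack hf hg hu)

/-- the vertex set of the trajectory. -/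
noncomputable def trajSet (f g : V → V) (u : V) (hf : Function.Involutive f)
    (hg : Function.Involutive g) (hu : f u = u) : Finset V :=
  (Finset.range (trajLen f g u hf hg hu + 1)).image (traj f g u)

include hu in
lemma trajLen_spec : traj f g u (trajLen f g u hf hg hu + 1) = traj f g u (trajLen f g u hf hg hu) :=
  Nat.find_spec (exists_backtrack hf hg hu)

include hu in
lemma trajLen_min {k : ℕ} (hk : k < trajLen f g u hf hg hu) :
    traj f g u (k + 1) ≠ traj f g u k :=
  Nat.find_min (exists_backtrack hf hg hu) hk

lemma mem_trajSet_iff {v : V} :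
    v ∈ trajSet f g u hf hg hu ↔ ∃ k ≤ trajLen f g u hf hg hu, traj f g u k = v := by
  simp only [trajSet, Finset.mem_image, Finset.mem_range, Nat.lt_succ_iff]

lemma u_mem_trajSet : u ∈ trajSet f g u hf hg hu :=
  (mem_trajSet_iff hf hg hu).mpr ⟨0, Nat.zero_le _, rfl⟩

lemma end_mem_trajSet : traj f g u (trajLen f g u hf hg hu) ∈ trajSet f g u hf hg hu :=
  (mem_trajSet_iff hf hg hu).mpr ⟨_, le_refl _, rfl⟩

lemma trajSet_closed : Closed (trajSet f g u hf hg hu) f g := by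
  intro v hv
  set m := trajLen f g u hf hg hu with hm
  rw [mem_trajSet_iff] at hv
  obtain ⟨k, hk, rfl⟩ := hv
  have hfwd : stepFun f g k (traj f g u k) ∈ trajSet f g u hf hg hu := by
    rcases Nat.lt_or_ge k m with h | h
    · exact (mem_trajSet_iff hf hg hu).mpr ⟨k + 1, by omega, (traj_succ k).symm⟩
    · have hkm : k = m := by omega
      subst hkm
      rw [← traj_succ, trajLen_spec hf hg hu]
      exact end_mem_trajSet hf hg hu
    -- fin
  have hbwd : ∀ hk1 : 1 ≤ k, stepFun f g (k - 1) (traj f g u k) ∈ trajSet f g u hf hg hu := by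
    intro hk1
    have : stepFun f g (k-1) (traj f g u ((k-1) + 1)) = traj f g u (k-1) := traj_back hf hg _
    rw [Nat.sub_add_cancel hk1] at this
    rw [this]
    exact (mem_trajSet_iff hf hg hu).mpr ⟨k - 1, by omega, rfl⟩
  constructor
  · -- f (x k) ∈ T
    rcases Nat.even_or_odd k with hpar | hpar
    · rcases Nat.eq_zero_or_pos k with rfl | hk1
      · simpa [traj, hu] using u_mem_trajSet hf hg hu
      · have : stepFun f g (k - 1) = f := by
          unfold stepFun
          rw [if_neg]
          rw [Nat.not_even_iff_odd]
          rcases hpar with ⟨r, hr⟩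
          exact ⟨r - 1, by omega⟩
        have h2 := hbwd hk1; rwa [this] at h2
    · have : stepFun f g k = f := by
        unfold stepFun; rw [if_neg (Nat.not_even_iff_odd.mpr hpar)]
      rwa [this] at hfwd
  · -- g (x k) ∈ T
    rcases Nat.even_or_odd k with hpar | hpar
    · have : stepFun f g k = g := by unfold stepFun; rw [if_pos hpar]
      rwa [this] at hfwd
    · have hk1 : 1 ≤ k := by
        rcases hpar with ⟨r, hr⟩; omega
      have : stepFun f g (k - 1) = g := by
        unfold stepFun
        rw [if_pos]
        rcases hpar with ⟨r, hr⟩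
        exact ⟨r, by omega⟩
      have h2 := hbwd hk1; rwa [this] at h2

include hgu in
lemma trajSet_gfix {v : V} (hv : v ∈ trajSet f g u hf hg hu) (hfix : g v = v) :
    v = traj f g u (trajLen f g u hf hg hu) := by
  set m := trajLen f g u hf hg hu with hm
  rw [mem_trajSet_iff] at hv
  obtain ⟨k, hk, rfl⟩ := hv
  rcases Nat.even_or_odd k with hpar | hpar
  · -- forward step is g
    have hstep : traj f g u (k + 1) = traj f g u k := by
      rw [traj_succ, stepFun, if_pos hpar, hfix]
    rcases Nat.lt_or_ge k m with h | h
    · exact absurd hstep (trajLen_min hf hg hu h)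
    · have : k = m := by omega
      rw [this]
  · -- backward step is g : backtrack at k - 1 < m
    exfalso
    have hk1 : 1 ≤ k := by rcases hpar with ⟨r, hr⟩; omega
    have hbk : stepFun f g (k - 1) (traj f g u k) = traj f g u (k - 1) := by
      have := traj_back hf hg (u := u) (k - 1)
      rwa [Nat.sub_add_cancel hk1] at this
    have hsg : stepFun f g (k - 1) = g := by
      unfold stepFun
      rw [if_pos]
      rcases hpar with ⟨r, hr⟩
      exact ⟨r, by omega⟩
    rw [hsg, hfix] at hbk
    have : traj f g u ((k - 1) + 1) = traj f g u (k - 1) := by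
      rw [Nat.sub_add_cancel hk1]
      exact hbk
    exact trajLen_min hf hg hu (by omega) this

include hgu in
lemma trajSet_ffix {v : V} (hv : v ∈ trajSet f g u hf hg hu) (hfix : f v = v) :
    v = u ∨ v = traj f g u (trajLen f g u hf hg hu) := by
  set m := trajLen f g u hf hg hu with hm
  rw [mem_trajSet_iff] at hv
  obtain ⟨k, hk, rfl⟩ := hv
  rcases Nat.even_or_odd k with hpar | hpar
  · -- backward step is f (k ≥ 1), or k = 0
    rcases Nat.eq_zero_or_pos k with rfl | hk1
    · left; rfl
    · exfalso
      have hbk : stepFun f g (k - 1) (traj f g u k) = traj f g u (k - 1) := by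
        have := traj_back hf hg (u := u) (k - 1)
        rwa [Nat.sub_add_cancel hk1] at this
      have hsf : stepFun f g (k - 1) = f := by
        unfold stepFun
        rw [if_neg, ]
        rw [Nat.not_even_iff_odd]
        rcases hpar with ⟨r, hr⟩
        exact ⟨r - 1, by omega⟩
      rw [hsf, hfix] at hbk
      have : traj f g u ((k - 1) + 1) = traj f g u (k - 1) := by
        rw [Nat.sub_add_cancel hk1]
        exact hbk
      exact trajLen_min hf hg hu (by omega) this
  · -- forward step is f
    have hstep : traj f g u (k + 1) = traj f g u k := by
      rw [traj_succ, stepFun, if_neg (Nat.not_even_iff_odd.mpr hpar), hfix]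
    rcases Nat.lt_or_ge k m with h | h
    · exact absurd hstep (trajLen_min hf hg hu h)
    · right
      have : k = m := by omega
      rw [this]

end TrajStruct


section Gallai

lemma gallai (hmiss : ∀ x : V, ∃ h, MaxInv G h ∧ h x = x) :
    ∀ f, MaxInv G f → ∀ u v : V, f u = u → f v = v → u ≠ v → G.Reachable u v → False := by
  set D : Set ℕ := {n | ∃ f, MaxInv G f ∧ ∃ u v : V, f u = u ∧ f v = v ∧ u ≠ v ∧
    G.Reachable u v ∧ G.dist u v = n} with hD
  intro f0 hf0 u0 v0 hu0 hv0 hne0 hreach0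
  have hDne : D.Nonempty := ⟨G.dist u0 v0, f0, hf0, u0, v0, hu0, hv0, hne0, hreach0, rfl⟩
  obtain ⟨f, hfmax, u, v, hu, hv, hne, hreach, hdist⟩ := Nat.sInf_mem hDne
  set d := sInf D with hdd
  obtain ⟨p, hp⟩ := hreach.exists_walk_length_eq_dist
  rw [hdist] at hp
  cases p with
  | nil => exact hne rfl
  | @cons _ w _ huw q =>
    -- q : walk from w to v, length d - 1
    by_cases hwv : w = v
    · subst hwv
      exact augment hfmax huw hu hv
    have hqlen : q.length + 1 = d := by simpa using hp
    have hdle : G.dist w v < d := by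
      have := SimpleGraph.dist_le q
      omega
    have hd2 : 2 ≤ d := by
      have : 1 ≤ q.length := by
        cases q with
        | nil => exact absurd rfl hwv
        | cons h q' => simp
      omega
    -- f covers w
    have hfw : f w ≠ w := by
      intro hfix
      have hmem : G.dist w v ∈ D :=
        ⟨f, hfmax, w, v, hfix, hv, hwv, ⟨q⟩, rfl⟩
      have := Nat.sInf_le hmem
      omega
    obtain ⟨g, hgmax, hgw⟩ := hmiss w
    have hgu : g u ≠ u := by
      intro hfix
      have hduw : G.dist u w ≤ 1 := by
        have := SimpleGraph.dist_le (SimpleGraph.Walk.cons huw SimpleGraph.Walk.nil)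
        simpa using this
      have hmem : G.dist u w ∈ D :=
        ⟨g, hgmax, u, w, hfix, hgw, fun h => hfw (h ▸ hu), huw.reachable, rfl⟩
      have := Nat.sInf_le hmem
      omega
    -- trajectory
    have hff : Function.Involutive f := hfmax.1.1
    have hgg : Function.Involutive g := hgmax.1.1
    set T := trajSet f g u hff hgg hu with hT
    set z := traj f g u (trajLen f g u hff hgg hu) with hz
    have hclosed : Closed T f g := trajSet_closed hff hgg hu
    have hcardEq : (fixSet f ∩ T).card = (fixSet g ∩ T).card :=
      closed_fix_card_eq hfmax hgmax hclosed
    have huT : u ∈ fixSet f ∩ T :=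
      Finset.mem_inter.mpr ⟨mem_fixSet.mpr hu, u_mem_trajSet hff hgg hu⟩
    have hgsub : (fixSet g ∩ T) ⊆ {z} := by
      intro x hx
      rw [Finset.mem_inter] at hx
      rw [Finset.mem_singleton]
      exact trajSet_gfix hff hgg hu hgu hx.2 (mem_fixSet.mp hx.1)
    have hgne : (fixSet g ∩ T).Nonempty := by
      rw [← Finset.card_pos, ← hcardEq, Finset.card_pos]
      exact ⟨u, huT⟩
    have hgeq : (fixSet g ∩ T) = {z} := (Finset.Nonempty.subset_singleton_iff hgne).mp hgsub
    have hzT : z ∈ T := by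
      have : z ∈ fixSet g ∩ T := hgeq ▸ Finset.mem_singleton_self z
      exact (Finset.mem_inter.mp this).2
    have hgz : g z = z := by
      have : z ∈ fixSet g ∩ T := hgeq ▸ Finset.mem_singleton_self z
      exact mem_fixSet.mp (Finset.mem_inter.mp this).1
    have hfz : f z ≠ z := by
      intro hfix
      by_cases hzu : z = u
      · exact hgu (hzu ▸ hgz)
      · have hsub2 : ({u, z} : Finset V) ⊆ fixSet f ∩ T := by
          intro x hx
          rw [Finset.mem_insert, Finset.mem_singleton] at hx
          rcases hx with rfl | rfl
          · exact huT
          · exact Finset.mem_inter.mpr ⟨mem_fixSet.mpr hfix, hzT⟩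
        have h2 : 2 ≤ (fixSet f ∩ T).card := by
          calc 2 = ({u, z} : Finset V).card := by
                rw [Finset.card_insert_of_notMem (by simpa using fun h => hzu h.symm),
                  Finset.card_singleton]
          _ ≤ _ := Finset.card_le_card hsub2
        rw [hcardEq, hgeq, Finset.card_singleton] at h2
        omega
    have hfeq : (fixSet f ∩ T) = {u} := by
      have hsub : (fixSet f ∩ T) ⊆ {u} := by
        intro x hx
        rw [Finset.mem_inter] at hx
        rw [Finset.mem_singleton]
        rcases trajSet_ffix hff hgg hu hgu hx.2 (mem_fixSet.mp hx.1) with h | h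
        · exact h
        · exfalso; apply hfz
          have hxz : x = z := by rw [hz]; exact h
          rw [← hxz]; exact mem_fixSet.mp hx.1
      exact (Finset.Nonempty.subset_singleton_iff ⟨u, huT⟩).mp hsub
    by_cases hwT : w ∈ T
    · -- w = z; hybrid g on T, f off T misses w and v
      have hwz : w = z := by
        have : w ∈ fixSet g ∩ T := Finset.mem_inter.mpr ⟨mem_fixSet.mpr hgw, hwT⟩
        rw [hgeq, Finset.mem_singleton] at this
        exact this
      have hclosed' : Closed T g f := fun x hx => ⟨(hclosed x hx).2, (hclosed x hx).1⟩
      have hmax' : MaxInv G (hyb T g f) := by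
        refine ⟨hyb_minv hgmax.1 hfmax.1 hclosed', ?_⟩
        have hcards : (fixSet (hyb T g f)).card = (fixSet f).card := by
          rw [fixSet_hyb_card, ← hcardEq, Finset.card_inter_add_card_sdiff]
        rw [hcards]
        exact hfmax.2
      have hvT : v ∉ T := by
        intro hvT
        have : v ∈ fixSet f ∩ T := Finset.mem_inter.mpr ⟨mem_fixSet.mpr hv, hvT⟩
        rw [hfeq, Finset.mem_singleton] at this
        exact hne this.symm
      have hw' : hyb T g f w = w := by rw [hyb_apply hwT, hgw]
      have hv' : hyb T g f v = v := by rw [hyb_apply_not hvT, hv]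
      have hmem : G.dist w v ∈ D :=
        ⟨hyb T g f, hmax', w, v, hw', hv', hwv, ⟨q⟩, rfl⟩
      have := Nat.sInf_le hmem
      omega
    · -- hybrid f on T, g off T misses u and w : augment along uw
      have hmax' : MaxInv G (hyb T f g) := by
        refine ⟨hyb_minv hfmax.1 hgmax.1 hclosed, ?_⟩
        have hcards : (fixSet (hyb T f g)).card = (fixSet g).card := by
          rw [fixSet_hyb_card, hcardEq, Finset.card_inter_add_card_sdiff]
        rw [hcards]
        exact hgmax.2
      have hu' : hyb T f g u = u := by rw [hyb_apply (u_mem_trajSet hff hgg hu), hu]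
      have hw' : hyb T f g w = w := by rw [hyb_apply_not hwT, hgw]
      exact augment hmax' huw hu' hw'

end Gallai


section LemmaA

lemma exists_max_missing (hG : Friendly G) (hclassII : chromaticIndex G = G.maxDegree + 1)
    (x : V) :
    ∃ M : Finset (Sym2 V), IsMatchingFinset G M ∧ M.card = matchingNumber G ∧
      ∀ e ∈ M, x ∉ e := by
  obtain ⟨P, hP1, hP2, hP3⟩ := hG
  -- the partition gives a proper edge coloring with P.card colors
  have hchrom : chromaticIndex G ≤ P.card := by
    apply Nat.sInf_le
    refine ⟨fun e => if h : ∃ M ∈ P, e ∈ M then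
      (P.equivFin ⟨h.choose, h.choose_spec.1⟩ : Fin P.card).val else 0, ?_, ?_⟩
    · intro e he
      have h : ∃ M ∈ P, e ∈ M := (hP2 e).mp (SimpleGraph.mem_edgeFinset.mpr he)
      dsimp only
      rw [dif_pos h]
      exact (P.equivFin ⟨h.choose, h.choose_spec.1⟩).isLt
    · intro e he e' he' hne hshare hc
      have h : ∃ M ∈ P, e ∈ M := (hP2 e).mp (SimpleGraph.mem_edgeFinset.mpr he)
      have h' : ∃ M ∈ P, e' ∈ M := (hP2 e').mp (SimpleGraph.mem_edgeFinset.mpr he')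
      dsimp only at hc
      rw [dif_pos h, dif_pos h'] at hc
      have hMeq : h.choose = h'.choose := by
        have := P.equivFin.injective (Fin.val_injective hc)
        exact Subtype.mk_eq_mk.mp this
      obtain ⟨v, hv1, hv2⟩ := hshare
      exact hP1 h.choose h.choose_spec.1 |>.1.2 e h.choose_spec.2 e'
        (hMeq ▸ h'.choose_spec.2) hne v ⟨hv1, hv2⟩
  rw [hclassII] at hchrom
  -- matchings in P covering x inject into edges at x
  set Q := P.filter (fun M => ∃ e ∈ M, x ∈ e) with hQ
  have hQcard : Q.card ≤ G.degree x := by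
    rw [← SimpleGraph.card_incidenceFinset_eq_degree]
    apply Finset.card_le_card_of_injOn (fun M =>
      if h : ∃ e ∈ M, x ∈ e then h.choose else s(x, x))
    · intro M hM
      rw [hQ, Finset.mem_coe, Finset.mem_filter] at hM
      dsimp only
      rw [dif_pos hM.2]
      rw [Finset.mem_coe, SimpleGraph.mem_incidenceFinset]
      exact ⟨(hP1 M hM.1).1.1 hM.2.choose_spec.1, hM.2.choose_spec.2⟩
    · intro M hM N hN heq
      rw [Finset.mem_coe, hQ, Finset.mem_filter] at hM hN
      dsimp only at heq
      rw [dif_pos hM.2, dif_pos hN.2] at heq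
      by_contra hMN
      have hdisj := hP3 M hM.1 N hN.1 hMN
      exact Finset.disjoint_left.mp hdisj hM.2.choose_spec.1
        (heq ▸ hN.2.choose_spec.1)
  have hdeg : G.degree x ≤ G.maxDegree := SimpleGraph.degree_le_maxDegree G x
  -- some M in P misses x
  have hQP : ¬ P ⊆ Q := by
    intro hsub
    have := Finset.card_le_card hsub
    omega
  obtain ⟨M, hMP, hMQ⟩ := Finset.not_subset.mp hQP
  rw [hQ, Finset.mem_filter] at hMQ
  push_neg at hMQ
  refine ⟨M, (hP1 M hMP).1, (hP1 M hMP).2, fun e he => hMQ hMP e he⟩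

end LemmaA


section Transport

/-- a matching of an induced subgraph maps to a matching of `G`. -/
lemma induce_matchingNumber_le (s : Set V) :
    matchingNumber (G.induce s) ≤ matchingNumber G := by
  have hne0 : {n | ∃ M : Finset (Sym2 ↥s), IsMatchingFinset (G.induce s) M ∧ M.card = n}.Nonempty :=
    ⟨0, ∅, empty_isMatching, rfl⟩
  apply csSup_le hne0
  rintro n ⟨M', hM', rfl⟩
  set N := M'.image (Sym2.map (Subtype.val : s → V)) with hN
  have hinj : Function.Injective (Sym2.map (Subtype.val : s → V)) :=
    Sym2.map.injective Subtype.val_injective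
  have hcard : N.card = M'.card := Finset.card_image_of_injective _ hinj
  rw [← hcard]
  apply card_le_matchingNumber
  constructor
  · intro e he
    rw [hN, Finset.coe_image, Set.mem_image] at he
    obtain ⟨e', he', rfl⟩ := he
    have := hM'.1 he'
    revert this
    refine Sym2.ind (fun a b h => ?_) e'
    rw [SimpleGraph.mem_edgeSet] at h
    rw [Sym2.map_pair_eq, SimpleGraph.mem_edgeSet]
    exact h
  · intro e he e' he' hne v hv
    rw [hN, Finset.mem_image] at he he'
    obtain ⟨d, hd, rfl⟩ := he
    obtain ⟨d', hd', rfl⟩ := he'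
    obtain ⟨a, ha, hav⟩ := Sym2.mem_map.mp hv.1
    obtain ⟨a', ha', hav'⟩ := Sym2.mem_map.mp hv.2
    have haa : a = a' := Subtype.val_injective (hav.trans hav'.symm)
    subst haa
    exact hM'.2 d hd d' hd' (fun h => hne (h ▸ rfl)) a ⟨ha, ha'⟩

lemma bddAbove_matching_set' (H : SimpleGraph {v : V // v ≠ x}) :
    BddAbove {n | ∃ M : Finset (Sym2 {v : V // v ≠ x}), IsMatchingFinset H M ∧ M.card = n} :=
  bddAbove_matching_set

/-- a maximum matching avoiding `x` transports to `G` minus `x`. -/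
lemma delVert_matchingNumber_ge {x : V} {M : Finset (Sym2 V)}
    (hM : IsMatchingFinset G M) (hMcard : M.card = matchingNumber G)
    (hmiss : ∀ e ∈ M, x ∉ e) :
    matchingNumber G ≤ matchingNumber (delVert G x) := by
  rcases M.eq_empty_or_nonempty with rfl | ⟨e₀, he₀⟩
  · rw [← hMcard]; simp
  -- get some vertex different from x
  have hy : ∃ y : V, y ≠ x := by
    induction e₀ with
    | _ a b =>
      refine ⟨a, fun h => hmiss _ he₀ ?_⟩
      rw [← h]; exact Sym2.mem_mk_left a b
  obtain ⟨y, hyx⟩ := hy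
  set ψ : V → {v : V // v ≠ x} := fun v => if h : v ≠ x then ⟨v, h⟩ else ⟨y, hyx⟩ with hψ
  have hψval : ∀ v : V, v ≠ x → (ψ v : V) = v := by
    intro v hv; rw [hψ]; simp [dif_pos hv]
  have hne_of_mem : ∀ e ∈ M, ∀ v, v ∈ e → v ≠ x := by
    intro e he v hv h
    exact hmiss e he (h ▸ hv)
  have hval_map : ∀ e ∈ M, Sym2.map (Subtype.val : {v : V // v ≠ x} → V) (Sym2.map ψ e) = e := by
    intro e he
    rw [Sym2.map_map]
    have : ∀ v ∈ e, (Subtype.val ∘ ψ) v = id v := by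
      intro v hv
      exact hψval v (hne_of_mem e he v hv)
    rw [Sym2.map_congr this, Sym2.map_id]
    rfl
  set N := M.image (Sym2.map ψ) with hN
  have hcard : N.card = M.card := by
    apply Finset.card_image_of_injOn
    intro e he e' he' heq
    rw [← hval_map e he, ← hval_map e' he', heq]
  have hmem_of : ∀ {e v}, e ∈ M → v ∈ Sym2.map ψ e → (v : V) ∈ e := by
    intro e v he hv
    obtain ⟨a, ha, hav⟩ := Sym2.mem_map.mp hv
    have : (v : V) = a := by
      rw [← hav]; exact hψval a (hne_of_mem e he a ha)
    rwa [this]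
  have hmatch : IsMatchingFinset (delVert G x) N := by
    constructor
    · intro e he
      rw [hN, Finset.coe_image, Set.mem_image] at he
      obtain ⟨e', he', rfl⟩ := he
      revert he'
      refine Sym2.ind (fun a b hmem => ?_) e'
      have hmem' : s(a, b) ∈ M := Finset.mem_coe.mp hmem
      have h := hM.1 hmem
      rw [SimpleGraph.mem_edgeSet] at h
      rw [Sym2.map_pair_eq, SimpleGraph.mem_edgeSet]
      show G.Adj (ψ a : V) (ψ b : V)
      rw [hψval a (hne_of_mem _ hmem' a (Sym2.mem_mk_left a b)),
        hψval b (hne_of_mem _ hmem' b (Sym2.mem_mk_right a b))]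
      exact h
    · intro e he e' he' hne v hv
      rw [hN, Finset.mem_image] at he he'
      obtain ⟨d, hd, rfl⟩ := he
      obtain ⟨d', hd', rfl⟩ := he'
      have hdd : d ≠ d' := fun h => hne (h ▸ rfl)
      exact hM.2 d hd d' hd' hdd (v : V) ⟨hmem_of hd hv.1, hmem_of hd' hv.2⟩
  calc matchingNumber G = N.card := by rw [hcard, hMcard]
  _ ≤ matchingNumber (delVert G x) := card_le_matchingNumber hmatch

end Transport


section Components

lemma reachable_induce {s : Set V} {a b : V} (p : G.Walk a b) :
    ∀ (_ : ∀ v ∈ p.support, v ∈ s) (ha : a ∈ s) (hb : b ∈ s),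
      (G.induce s).Reachable ⟨a, ha⟩ ⟨b, hb⟩ := by
  induction p with
  | nil =>
    intro hs ha hb
    rfl
  | @cons a w b h q ih =>
    intro hs ha hb
    have hw : w ∈ s := hs w (by simp [SimpleGraph.Walk.support_cons])
    have hadj : (G.induce s).Adj ⟨a, ha⟩ ⟨w, hw⟩ := h
    refine hadj.reachable.trans (ih ?_ hw hb)
    intro v hv
    exact hs v (by simp [SimpleGraph.Walk.support_cons, hv])

lemma component_connected (c : G.ConnectedComponent) : (G.induce c.supp).Connected := by
  rw [SimpleGraph.connected_iff]
  constructor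
  · rintro ⟨u, hu⟩ ⟨v, hv⟩
    rw [SimpleGraph.ConnectedComponent.mem_supp_iff] at hu hv
    have hr : G.Reachable u v := SimpleGraph.ConnectedComponent.exact (hu.trans hv.symm)
    obtain ⟨p⟩ := hr
    apply reachable_induce p
    intro w hw
    rw [SimpleGraph.ConnectedComponent.mem_supp_iff]
    have : G.Reachable u w := ⟨p.takeUntil w hw⟩
    rw [← hu]
    exact (SimpleGraph.ConnectedComponent.sound this).symm
  · obtain ⟨v, hv⟩ := c.exists_rep
    exact ⟨⟨v, (SimpleGraph.ConnectedComponent.mem_supp_iff c v).mpr hv⟩⟩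

end Components

end FriendlyAux

theorem stmt_13 {V : Type*} [Fintype V] (G : SimpleGraph V) (hG : Friendly G)
    (hclassII : chromaticIndex G = G.maxDegree + 1) :
    (∀ x : V, matchingNumber (delVert G x) = matchingNumber G) ∧
    ∀ c : G.ConnectedComponent, FactorCritical (G.induce c.supp) := by
  classical
  open FriendlyAux in
  have hmiss : ∀ y : V, ∃ h, MaxInv G h ∧ h y = y := by
    intro y
    obtain ⟨M, h1, h2, h3⟩ := exists_max_missing hG hclassII y
    obtain ⟨hmax, hiff⟩ := maxInv_of_card h1 h2
    refine ⟨matchInv M, hmax, ?_⟩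
    apply matchInv_fix
    rintro ⟨e, he, hy⟩
    exact h3 e he hy
  constructor
  · intro x
    refine le_antisymm ?_ ?_
    · exact FriendlyAux.induce_matchingNumber_le (G := G) (s := {v : V | v ≠ x})
    · obtain ⟨M, h1, h2, h3⟩ := FriendlyAux.exists_max_missing hG hclassII x
      exact FriendlyAux.delVert_matchingNumber_ge h1 h2 h3
  · intro c
    refine ⟨FriendlyAux.component_connected c, ?_⟩
    intro x
    obtain ⟨M, h1, h2, h3⟩ := FriendlyAux.exists_max_missing hG hclassII (x : V)
    obtain ⟨hmax, hiff⟩ := FriendlyAux.maxInv_of_card h1 h2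
    set f := FriendlyAux.matchInv M with hf
    have hfx : f (x : V) = (x : V) := by
      apply FriendlyAux.matchInv_fix
      rintro ⟨e, he, hy⟩
      exact h3 e he hy
    have hcov : ∀ u : V, u ∈ c.supp → u ≠ (x : V) → f u ≠ u := by
      intro u hu hne hfix
      have hreach : G.Reachable u (x : V) := by
        rw [SimpleGraph.ConnectedComponent.mem_supp_iff] at hu
        exact SimpleGraph.ConnectedComponent.exact (hu.trans ((x : ↥c.supp).2).symm)
      exact FriendlyAux.gallai hmiss f hmax u (x : V) hfix hfx hne hreach
    have key : ∀ u : {v : ↥c.supp // v ≠ x},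
        f ((u : ↥c.supp) : V) ∈ c.supp ∧ f ((u : ↥c.supp) : V) ≠ (x : V) ∧
        f ((u : ↥c.supp) : V) ≠ ((u : ↥c.supp) : V) ∧
        G.Adj ((u : ↥c.supp) : V) (f ((u : ↥c.supp) : V)) := by
      intro u
      set u1 := ((u : ↥c.supp) : V) with hu1
      have hu1supp : u1 ∈ c.supp := (u : ↥c.supp).2
      have hu1ne : u1 ≠ (x : V) := fun h => u.2 (Subtype.ext h)
      have hmove : f u1 ≠ u1 := hcov u1 hu1supp hu1ne
      have hadj : G.Adj u1 (f u1) := hmax.1.2 u1 hmove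
      have hfsupp : f u1 ∈ c.supp := by
        rw [SimpleGraph.ConnectedComponent.mem_supp_iff]
        rw [SimpleGraph.ConnectedComponent.connectedComponentMk_eq_of_adj hadj.symm]
        exact (SimpleGraph.ConnectedComponent.mem_supp_iff c u1).mp hu1supp
      have hfne : f u1 ≠ (x : V) := by
        intro h
        apply hu1ne
        rw [← hfx, ← h, hmax.1.1 u1]
      exact ⟨hfsupp, hfne, hmove, hadj⟩
    set F : {v : ↥c.supp // v ≠ x} → {v : ↥c.supp // v ≠ x} :=
      fun u => ⟨⟨f ((u : ↥c.supp) : V), (key u).1⟩,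
        fun h => (key u).2.1 (congrArg Subtype.val h)⟩ with hF
    have hFinv : Function.Involutive F := by
      intro u
      apply Subtype.ext
      apply Subtype.ext
      exact hmax.1.1 ((u : ↥c.supp) : V)
    have hFne : ∀ u, F u ≠ u := by
      intro u h
      exact (key u).2.2.1 (congrArg (fun w : {v : ↥c.supp // v ≠ x} => ((w : ↥c.supp) : V)) h)
    have hFminv : FriendlyAux.MInv (delVert (G.induce c.supp) x) F := by
      refine ⟨hFinv, fun u _ => ?_⟩
      exact (key u).2.2.2
    exact ⟨FriendlyAux.invMatch F, FriendlyAux.invMatch_isMatching hFminv,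
      fun v => (FriendlyAux.invMatch_cover hFminv).mpr (hFne v)⟩
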